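/- Let A be a Banach ring, and let I ⊆ J ⊆ A be ideals of the underlying ring having the same closure. Then the induced map K₀(A/I) → K₀(A/J) is injective. -/

import Mathlib

/-- Murray–von Neumann equivalence of (idempotent) matrices over a ring. -/
def MvNEquiv {R : Type*} [Ring R] {ι κ : Type*} [Fintype ι] [Fintype κ]
    (p : Matrix ι ι R) (q : Matrix κ κ R) : Prop :=
  ∃ (a : Matrix ι κ R) (b : Matrix κ ι R), a * b = p ∧ b * a = q

/-- The ring homomorphism between quotients induced by an inequality of ring congruences. -/
def RingCon.quotMap {A : Type*} [Ring A] (c d : RingCon A) (h : c ≤ d) :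
    c.Quotient →+* d.Quotient where
  toFun := Quotient.map' id (fun a b hab => h hab)
  map_one' := rfl
  map_mul' := by rintro ⟨a⟩ ⟨b⟩; rfl
  map_zero' := rfl
  map_add' := by rintro ⟨a⟩ ⟨b⟩; rfl

open Matrix

section MvNLemmas

variable {R : Type*} [Ring R]

lemma MvNEquiv.symm {ι κ : Type*} [Fintype ι] [Fintype κ] {p : Matrix ι ι R} {q : Matrix κ κ R}
    (h : MvNEquiv p q) : MvNEquiv q p := by
  obtain ⟨a, b, h1, h2⟩ := h; exact ⟨b, a, h2, h1⟩

lemma MvNEquiv.refl {ι : Type*} [Fintype ι] {p : Matrix ι ι R} (hp : p * p = p) : MvNEquiv p p :=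
  ⟨p, p, hp, hp⟩

lemma MvNEquiv.trans {ι κ μ : Type*} [Fintype ι] [Fintype κ] [Fintype μ]
    {p : Matrix ι ι R} {q : Matrix κ κ R} {t : Matrix μ μ R}
    (hp : p * p = p) (ht : t * t = t)
    (h1 : MvNEquiv p q) (h2 : MvNEquiv q t) : MvNEquiv p t := by
  obtain ⟨a, b, hab, hba⟩ := h1
  obtain ⟨c, d, hcd, hdc⟩ := h2
  refine ⟨a * c, d * b, ?_, ?_⟩
  · calc a * c * (d * b) = a * (c * d) * b := by simp only [Matrix.mul_assoc]
    _ = a * (b * a) * b := by rw [hcd, hba]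
    _ = (a * b) * (a * b) := by simp only [Matrix.mul_assoc]
    _ = p := by rw [hab, hp]
  · calc d * b * (a * c) = d * (b * a) * c := by simp only [Matrix.mul_assoc]
    _ = d * (c * d) * c := by rw [hba, hcd]
    _ = (d * c) * (d * c) := by simp only [Matrix.mul_assoc]
    _ = t := by rw [hdc, ht]

lemma MvNEquiv.blockSum {ι κ ι' κ' : Type*} [Fintype ι] [Fintype κ] [Fintype ι'] [Fintype κ']
    {p : Matrix ι ι R} {q : Matrix κ κ R} {p' : Matrix ι' ι' R} {q' : Matrix κ' κ' R}
    (h : MvNEquiv p q) (h' : MvNEquiv p' q') :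
    MvNEquiv (fromBlocks p 0 0 p') (fromBlocks q 0 0 q') := by
  obtain ⟨a, b, hab, hba⟩ := h
  obtain ⟨a', b', hab', hba'⟩ := h'
  refine ⟨fromBlocks a 0 0 a', fromBlocks b 0 0 b', ?_, ?_⟩
  · rw [fromBlocks_multiply]; simp [hab, hab']
  · rw [fromBlocks_multiply]; simp [hba, hba']

lemma MvNEquiv.reindexRight {ι ι' : Type*} [Fintype ι] [Fintype ι']
    (e : ι ≃ ι') {p : Matrix ι ι R} (hp : p * p = p) :
    MvNEquiv p ((Matrix.reindex e e) p) := by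
  refine ⟨p.submatrix (Equiv.refl ι) e.symm, p.submatrix e.symm (Equiv.refl ι), ?_, ?_⟩
  · rw [submatrix_mul_equiv, hp]
    ext i j; simp
  · rw [submatrix_mul_equiv, hp]
    rfl

lemma mvn_complement {κ : Type*} [Fintype κ] [DecidableEq κ] {r : Matrix κ κ R}
    (hr : r * r = r) :
    MvNEquiv (fromBlocks r 0 0 (1 - r)) (1 : Matrix κ κ R) := by
  have h1 : r * (1 - r) = 0 := by rw [mul_sub, mul_one, hr, sub_self]
  have h2 : (1 - r) * r = 0 := by rw [sub_mul, one_mul, hr, sub_self]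
  have h3 : (1 - r) * (1 - r) = 1 - r := by
    rw [sub_mul, one_mul, mul_sub, mul_one, hr]; abel
  refine ⟨fromRows r (1 - r), fromCols r (1 - r), ?_, ?_⟩
  · rw [fromRows_mul_fromCols, hr, h1, h2, h3]
  · rw [fromCols_mul_fromRows, hr, h3, add_sub_cancel]

lemma fromBlocks_idem {ι κ : Type*} [Fintype ι] [Fintype κ]
    {X : Matrix ι ι R} {Y : Matrix κ κ R} (hX : X * X = X) (hY : Y * Y = Y) :
    fromBlocks X 0 0 Y * fromBlocks X 0 0 Y = fromBlocks X 0 0 Y := by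
  rw [fromBlocks_multiply]; simp [hX, hY]

lemma one_sub_idem {ι : Type*} [Fintype ι] [DecidableEq ι] {r : Matrix ι ι R}
    (hr : r * r = r) : (1 - r) * (1 - r) = 1 - r := by
  rw [sub_mul, one_mul, mul_sub, mul_one, hr]; abel

end MvNLemmas

set_option maxHeartbeats 1000000 in
/-- Key algebraic lifting lemma: if the kernel of `φ` consists of "radical-like" elements
(in the sense that `1 - M` is invertible for every matrix `M` with entries in the kernel),
then Murray–von Neumann equivalence of idempotent matrices lifts along `φ`. -/
lemma mvn_lift {R S : Type*} [Ring R] [Ring S] (φ : R →+* S) (hφ : Function.Surjective φ)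
    {ι κ : Type*} [Fintype ι] [Fintype κ] [DecidableEq ι] [DecidableEq κ]
    (hι : ∀ M : Matrix ι ι R, (∀ i j, φ (M i j) = 0) → IsUnit (1 - M))
    (hκ : ∀ M : Matrix κ κ R, (∀ i j, φ (M i j) = 0) → IsUnit (1 - M))
    (e : Matrix ι ι R) (f : Matrix κ κ R) (he : e * e = e) (hf : f * f = f)
    (h : MvNEquiv (e.map φ) (f.map φ)) : MvNEquiv e f := by
  obtain ⟨u, v, huv, hvu⟩ := h
  obtain ⟨c, hc⟩ : ∃ c : Matrix ι κ R, c.map φ = u :=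
    ⟨Matrix.of fun i j => (hφ (u i j)).choose, by ext i j; exact (hφ (u i j)).choose_spec⟩
  obtain ⟨d, hd⟩ : ∃ d : Matrix κ ι R, d.map φ = v :=
    ⟨Matrix.of fun i j => (hφ (v i j)).choose, by ext i j; exact (hφ (v i j)).choose_spec⟩
  obtain ⟨E, hE'⟩ : ∃ E, E = e.map φ := ⟨_, rfl⟩
  obtain ⟨F, hF'⟩ : ∃ F, F = f.map φ := ⟨_, rfl⟩
  rw [← hE'] at huv
  rw [← hF'] at hvu
  have hE : E * E = E := by rw [hE', ← Matrix.map_mul, he]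
  have hF : F * F = F := by rw [hF', ← Matrix.map_mul, hf]
  have huF : u * F = E * u := by rw [← hvu, ← Matrix.mul_assoc, huv]
  have hFv : F * v = v * E := by rw [← hvu, Matrix.mul_assoc, huv]
  obtain ⟨a, ha⟩ : ∃ a, a = e * c * f := ⟨_, rfl⟩
  obtain ⟨b, hb⟩ : ∃ b, b = f * d * e := ⟨_, rfl⟩
  have hπa : a.map φ = E * u := by
    rw [ha, Matrix.map_mul, Matrix.map_mul, hc, ← hE', ← hF']
    rw [Matrix.mul_assoc, huF, ← Matrix.mul_assoc, hE]
  have hπb : b.map φ = v * E := by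
    rw [hb, Matrix.map_mul, Matrix.map_mul, hd, ← hE', ← hF']
    rw [Matrix.mul_assoc, ← hFv, ← Matrix.mul_assoc, hF, hFv]
  have hπab : (a * b).map φ = E := by
    rw [Matrix.map_mul, hπa, hπb]
    calc E * u * (v * E) = E * (u * v) * E := by simp only [Matrix.mul_assoc]
    _ = E := by rw [huv, hE, hE]
  have hπba : (b * a).map φ = F := by
    rw [Matrix.map_mul, hπb, hπa]
    calc v * E * (E * u) = v * (E * E) * u := by simp only [Matrix.mul_assoc]
    _ = v * (E * u) := by rw [hE, Matrix.mul_assoc]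
    _ = v * (u * F) := by rw [huF]
    _ = F * F := by rw [← Matrix.mul_assoc, hvu]
    _ = F := hF
  have ea : e * a = a := by
    rw [ha]; simp only [← Matrix.mul_assoc]; rw [he]
  have af : a * f = a := by
    rw [ha]; simp only [Matrix.mul_assoc]; rw [hf]
  have fb : f * b = b := by
    rw [hb]; simp only [← Matrix.mul_assoc]; rw [hf]
  have be : b * e = b := by
    rw [hb]; simp only [Matrix.mul_assoc]; rw [he]
  -- the unit g = 1 - (e - a*b)
  have hker : ∀ i j, φ ((e - a * b) i j) = 0 := by
    intro i j
    have : (e - a * b).map φ = 0 := by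
      rw [Matrix.map_sub φ (map_sub φ), hπab, ← hE', sub_self]
    calc φ ((e - a * b) i j) = ((e - a * b).map φ) i j := rfl
    _ = 0 := by rw [this]; rfl
  obtain ⟨G, hG⟩ := hι (e - a * b) hker
  have habe : a * b * e = a * b := by rw [Matrix.mul_assoc, be]
  have heab : e * (a * b) = a * b := by rw [← Matrix.mul_assoc, ea]
  have hge : G.val * e = a * b := by
    rw [hG, sub_mul, one_mul, sub_mul, he, habe, sub_sub_cancel]
  have heg : e * G.val = a * b := by
    rw [hG, mul_sub, mul_one, mul_sub, he, heab, sub_sub_cancel]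
  have hcomm : Commute e G.val := heg.trans hge.symm
  have hcommi : Commute e (G⁻¹).val := hcomm.units_inv_right
  refine ⟨(G⁻¹).val * a, b, ?_, ?_⟩
  · rw [Matrix.mul_assoc, ← hge, ← Matrix.mul_assoc, Units.inv_mul, Matrix.one_mul]
  -- now show b * (G⁻¹ * a) = f
  obtain ⟨h, hh'⟩ : ∃ h, h = b * ((G⁻¹).val * a) := ⟨_, rfl⟩
  have hh2 : h * h = h := by
    rw [hh']
    calc (b * ((G⁻¹).val * a)) * (b * ((G⁻¹).val * a))
        = (b * (G⁻¹).val) * (a * b) * ((G⁻¹).val * a) := by simp only [Matrix.mul_assoc]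
    _ = (b * (G⁻¹).val) * (G.val * e) * ((G⁻¹).val * a) := by rw [← hge]
    _ = (b * ((G⁻¹).val * G.val)) * ((e * (G⁻¹).val) * a) := by simp only [Matrix.mul_assoc]
    _ = b * (((G⁻¹).val * e) * a) := by rw [Units.inv_mul, Matrix.mul_one, hcommi.eq]
    _ = b * ((G⁻¹).val * (e * a)) := by rw [Matrix.mul_assoc]
    _ = b * ((G⁻¹).val * a) := by rw [ea]
  have hfh : f * h = h := by rw [hh', ← Matrix.mul_assoc, fb]
  have hhf : h * f = h := by
    rw [hh']
    calc b * ((G⁻¹).val * a) * f = b * ((G⁻¹).val * (a * f)) := by simp only [Matrix.mul_assoc]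
    _ = b * ((G⁻¹).val * a) := by rw [af]
  have hπg : (G.val).map φ = 1 := by
    rw [hG, Matrix.map_sub φ (map_sub φ),
      Matrix.map_sub φ (map_sub φ), hπab, ← hE', sub_self, sub_zero,
      Matrix.map_one φ (map_zero φ) (map_one φ)]
  have hπgi : ((G⁻¹).val).map φ = 1 := by
    have h1 : (G.val * (G⁻¹).val).map φ = 1 := by
      rw [G.mul_inv, Matrix.map_one φ (map_zero φ) (map_one φ)]
    rwa [Matrix.map_mul, hπg, Matrix.one_mul] at h1
  have hπh : h.map φ = F := by
    rw [hh', Matrix.map_mul, Matrix.map_mul, hπgi, Matrix.one_mul, hπb, hπa]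
    calc v * E * (E * u) = v * (E * E) * u := by simp only [Matrix.mul_assoc]
    _ = v * (E * u) := by rw [hE, Matrix.mul_assoc]
    _ = v * (u * F) := by rw [huF]
    _ = F * F := by rw [← Matrix.mul_assoc, hvu]
    _ = F := hF
  have hyk : ∀ i j, φ ((f - h) i j) = 0 := by
    intro i j
    have : (f - h).map φ = 0 := by
      rw [Matrix.map_sub φ (map_sub φ), hπh, ← hF', sub_self]
    calc φ ((f - h) i j) = ((f - h).map φ) i j := rfl
    _ = 0 := by rw [this]; rfl
  obtain ⟨U, hU⟩ := hκ (f - h) hyk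
  have hy2 : (f - h) * (f - h) = f - h := by
    rw [sub_mul, mul_sub, mul_sub, hf, hfh, hhf, hh2, sub_self, sub_zero]
  have hyU : (f - h) * U.val = 0 := by
    rw [hU, mul_sub, mul_one, hy2, sub_self]
  have : f - h = 0 := by
    calc f - h = (f - h) * (U.val * (U⁻¹).val) := by rw [U.mul_inv, Matrix.mul_one]
    _ = ((f - h) * U.val) * (U⁻¹).val := by rw [Matrix.mul_assoc]
    _ = 0 := by rw [hyU, zero_mul]
  rw [← hh']
  exact (sub_eq_zero.mp this).symm

/-- Matrices with entries in `J/I` are "radical": `1 - M` is invertible over `A/I`. -/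
lemma isUnit_one_sub_of_entries {A : Type*} [NormedRing A] [CompleteSpace A]
    (I J : TwoSidedIdeal A) (hIJ : I ≤ J)
    (hcl : closure (I : Set A) = closure (J : Set A))
    {ι : Type*} [Fintype ι] [DecidableEq ι]
    (M : Matrix ι ι I.ringCon.Quotient)
    (hM : ∀ i j, RingCon.quotMap I.ringCon J.ringCon
      (TwoSidedIdeal.ringCon_le_iff.mp hIJ) (M i j) = 0) :
    IsUnit (1 - M) := by
  classical
  -- pick representatives in J
  have hrep : ∀ x : I.ringCon.Quotient,
      RingCon.quotMap I.ringCon J.ringCon (TwoSidedIdeal.ringCon_le_iff.mp hIJ) x = 0 →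
      ∃ a : A, a ∈ J ∧ RingCon.mk' I.ringCon a = x := by
    intro x hx
    induction x using Quotient.inductionOn' with
    | h a =>
      refine ⟨a, ?_, rfl⟩
      have h0 : J.ringCon a 0 := Quotient.eq''.mp hx
      simpa using (J.rel_iff a 0).mp h0
  have hrep' : ∀ i j, ∃ a : A, a ∈ J ∧ RingCon.mk' I.ringCon a = M i j :=
    fun i j => hrep (M i j) (hM i j)
  choose aa haJ hamk using hrep'
  set ε : ℝ := 1 / (Fintype.card ι + 1) with hε'
  have hε : 0 < ε := by positivity
  have happrox : ∀ i j, ∃ y ∈ (I : Set A), dist (aa i j) y < ε := by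
    intro i j
    have h1 : aa i j ∈ closure (J : Set A) := subset_closure (haJ i j)
    rw [← hcl] at h1
    exact Metric.mem_closure_iff.mp h1 ε hε
  choose bb hbI hbd using happrox
  set NM : Matrix ι ι A := Matrix.of fun i j => aa i j - bb i j with hNM
  letI : NormedRing (Matrix ι ι A) := Matrix.linftyOpNormedRing
  haveI : CompleteSpace (PiLp 1 fun _ : ι => A) :=
    inferInstance
  haveI : @CompleteSpace (Matrix ι ι A) PseudoMetricSpace.toUniformSpace :=
    inferInstanceAs (CompleteSpace (ι → ι → A))
  have hnorm : ‖NM‖ < 1 := by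
    rw [Matrix.linfty_opNorm_def]
    have hsup : ((Finset.univ : Finset ι).sup fun i : ι => ∑ j : ι, ‖NM i j‖₊) < 1 := by
      rw [Finset.sup_lt_iff (by exact zero_lt_one)]
      intro i _
      set εnn : NNReal := ⟨ε, hε.le⟩ with hεnn
      have hrow : ∀ j ∈ (Finset.univ : Finset ι), ‖NM i j‖₊ ≤ εnn := by
        intro j _
        have h2 : ‖aa i j - bb i j‖ < ε := by rw [← dist_eq_norm]; exact hbd i j
        have hle : ‖NM i j‖ ≤ ε := le_of_lt h2
        exact hle
      calc (∑ j : ι, ‖NM i j‖₊) ≤ (Finset.univ : Finset ι).card • εnn :=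
            Finset.sum_le_card_nsmul _ _ _ hrow
      _ = (Fintype.card ι : NNReal) * εnn := by
            rw [Finset.card_univ, nsmul_eq_mul]
      _ < 1 := by
            rw [← NNReal.coe_lt_coe]
            push_cast [hεnn]
            show (Fintype.card ι : ℝ) * ε < 1
            rw [hε', mul_one_div, div_lt_one (by positivity)]
            linarith
    calc (↑((Finset.univ : Finset ι).sup fun i : ι => ∑ j : ι, ‖NM i j‖₊) : ℝ)
        < (↑(1 : NNReal) : ℝ) := by exact_mod_cast hsup
    _ = 1 := by norm_num
  obtain ⟨W, hW⟩ := isUnit_one_sub_of_norm_lt_one hnorm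
  -- push the unit to the quotient
  have hmkb : ∀ i j, RingCon.mk' I.ringCon (bb i j) = 0 := by
    intro i j
    have : I.ringCon (bb i j) 0 := (I.rel_iff _ _).mpr (by simpa using hbI i j)
    calc RingCon.mk' I.ringCon (bb i j) = RingCon.mk' I.ringCon 0 := Quotient.sound' this
    _ = 0 := map_zero _
  have hΨ : NM.map (RingCon.mk' I.ringCon) = M := by
    ext i j
    show RingCon.mk' I.ringCon (aa i j - bb i j) = M i j
    rw [map_sub, hamk i j, hmkb i j, sub_zero]
  have h1 : ((1 : Matrix ι ι A) - NM).map (RingCon.mk' I.ringCon) = 1 - M := by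
    rw [Matrix.map_sub _ (map_sub _), hΨ,
      Matrix.map_one _ (map_zero _) (map_one _)]
  rw [isUnit_iff_exists]
  refine ⟨(W⁻¹).val.map (RingCon.mk' I.ringCon), ?_, ?_⟩
  · rw [← h1, ← Matrix.map_mul, ← hW, W.mul_inv,
      Matrix.map_one _ (map_zero _) (map_one _)]
  · rw [← h1, ← Matrix.map_mul, ← hW, W.inv_mul,
      Matrix.map_one _ (map_zero _) (map_one _)]

/-- Let `A` be a Banach ring and `I ⊆ J` two-sided ideals with the same closure. Then
`K₀(A/I) → K₀(A/J)` is injective: if two idempotent matrices `p`, `q` over `A/I` have equal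
classes in `K₀(A/J)` (i.e. their images become stably Murray–von Neumann equivalent over
`A/J`), then they already have equal classes in `K₀(A/I)`. -/
theorem K0_injective_of_same_closure {A : Type*} [NormedRing A] [CompleteSpace A]
    (h1 : ‖(1 : A)‖ ≤ 1) (I J : TwoSidedIdeal A) (hIJ : I ≤ J)
    (hcl : closure (I : Set A) = closure (J : Set A)) :
    ∀ (n m : ℕ) (p : Matrix (Fin n) (Fin n) I.ringCon.Quotient)
      (q : Matrix (Fin m) (Fin m) I.ringCon.Quotient), p * p = p → q * q = q →
      (∃ (k : ℕ) (r : Matrix (Fin k) (Fin k) J.ringCon.Quotient), r * r = r ∧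
        MvNEquiv
          (Matrix.fromBlocks
            (p.map (RingCon.quotMap I.ringCon J.ringCon (TwoSidedIdeal.ringCon_le_iff.mp hIJ)))
            0 0 r)
          (Matrix.fromBlocks
            (q.map (RingCon.quotMap I.ringCon J.ringCon (TwoSidedIdeal.ringCon_le_iff.mp hIJ)))
            0 0 r)) →
      ∃ (k : ℕ) (s : Matrix (Fin k) (Fin k) I.ringCon.Quotient), s * s = s ∧
        MvNEquiv (Matrix.fromBlocks p 0 0 s) (Matrix.fromBlocks q 0 0 s) := by
  classical
  intro n m p q hp hq hmvn
  obtain ⟨k, r, hr, hrel⟩ := hmvn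
  set φ := RingCon.quotMap I.ringCon J.ringCon (TwoSidedIdeal.ringCon_le_iff.mp hIJ) with hφ'
  have hφsur : Function.Surjective φ := by
    intro y
    induction y using Quotient.inductionOn' with
    | h a => exact ⟨Quotient.mk'' a, rfl⟩
  set P := p.map φ with hP'
  set Q := q.map φ with hQ'
  have hP : P * P = P := by rw [hP', ← Matrix.map_mul, hp]
  have hQ : Q * Q = Q := by rw [hQ', ← Matrix.map_mul, hq]
  have h1r : (1 - r) * (1 - r) = 1 - r := one_sub_idem hr
  -- the chain of MvN equivalences over A/J
  set M0 := fromBlocks P 0 0 (1 : Matrix (Fin k) (Fin k) J.ringCon.Quotient) with hM0'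
  set M1 := fromBlocks P 0 0 (fromBlocks r 0 0 (1 - r)) with hM1'
  set M2 := fromBlocks (fromBlocks P 0 0 r) 0 0 (1 - r) with hM2'
  set N0 := fromBlocks Q 0 0 (1 : Matrix (Fin k) (Fin k) J.ringCon.Quotient) with hN0'
  set N1 := fromBlocks Q 0 0 (fromBlocks r 0 0 (1 - r)) with hN1'
  set N2 := fromBlocks (fromBlocks Q 0 0 r) 0 0 (1 - r) with hN2'
  have hM0 : M0 * M0 = M0 := fromBlocks_idem hP (one_mul 1)
  have hM1 : M1 * M1 = M1 := fromBlocks_idem hP (fromBlocks_idem hr h1r)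
  have hM2 : M2 * M2 = M2 := fromBlocks_idem (fromBlocks_idem hP hr) h1r
  have hN0 : N0 * N0 = N0 := fromBlocks_idem hQ (one_mul 1)
  have hN1 : N1 * N1 = N1 := fromBlocks_idem hQ (fromBlocks_idem hr h1r)
  have hN2 : N2 * N2 = N2 := fromBlocks_idem (fromBlocks_idem hQ hr) h1r
  have e01 : MvNEquiv M0 M1 := MvNEquiv.blockSum (.refl hP) (mvn_complement hr).symm
  have e10' : MvNEquiv N1 N0 := MvNEquiv.blockSum (.refl hQ) (mvn_complement hr)
  have hMre : M1 = (Matrix.reindex (Equiv.sumAssoc (Fin n) (Fin k) (Fin k))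
      (Equiv.sumAssoc (Fin n) (Fin k) (Fin k))) M2 := by
    rw [hM1', hM2']
    ext (i | i | i) (j | j | j) <;>
      simp [Matrix.reindex_apply, Matrix.submatrix_apply, Equiv.sumAssoc]
  have hNre : N1 = (Matrix.reindex (Equiv.sumAssoc (Fin m) (Fin k) (Fin k))
      (Equiv.sumAssoc (Fin m) (Fin k) (Fin k))) N2 := by
    rw [hN1', hN2']
    ext (i | i | i) (j | j | j) <;>
      simp [Matrix.reindex_apply, Matrix.submatrix_apply, Equiv.sumAssoc]
  have e12 : MvNEquiv M1 M2 := by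
    rw [hMre]; exact (MvNEquiv.reindexRight _ hM2).symm
  have e21' : MvNEquiv N2 N1 := by
    rw [hNre]; exact MvNEquiv.reindexRight _ hN2
  have e23 : MvNEquiv M2 N2 := MvNEquiv.blockSum hrel (.refl h1r)
  have echain : MvNEquiv M0 N0 :=
    MvNEquiv.trans hM0 hN0 e01 <|
      MvNEquiv.trans hM1 hN0 e12 <|
        MvNEquiv.trans hM2 hN0 e23 <|
          MvNEquiv.trans hN2 hN0 e21' e10'
  -- now lift
  have hmapE : (fromBlocks p 0 0 (1 : Matrix (Fin k) (Fin k) I.ringCon.Quotient)).map φ = M0 := by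
    simp only [Matrix.fromBlocks_map, Matrix.map_zero _ (map_zero φ),
      Matrix.map_one _ (map_zero φ) (map_one φ), hM0', hP']
  have hmapF : (fromBlocks q 0 0 (1 : Matrix (Fin k) (Fin k) I.ringCon.Quotient)).map φ = N0 := by
    simp only [Matrix.fromBlocks_map, Matrix.map_zero _ (map_zero φ),
      Matrix.map_one _ (map_zero φ) (map_one φ), hN0', hQ']
  refine ⟨k, 1, one_mul 1, ?_⟩
  refine mvn_lift φ hφsur
    (fun M hM => isUnit_one_sub_of_entries I J hIJ hcl M hM)
    (fun M hM => isUnit_one_sub_of_entries I J hIJ hcl M hM)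
    _ _ (fromBlocks_idem hp (one_mul 1)) (fromBlocks_idem hq (one_mul 1)) ?_
  rw [hmapE, hmapF]
  exact echain
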